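/- arXiv:1909.08139 — 2 statements merged into one kernel-verified Lean document; each statement's English description precedes it below -/
import Mathlib

section
/- For S the swap operator on C^N ⊗ C^N and U_t = exp(itS) = cos t · 1 + i sin t · S, the linear operator entanglements satisfy E(U_t) = E(S)(1 − cos⁴t) and E(U_t S) = E(S)(1 − sin⁴t), where E(S) = 1 − 1/N². -/
open Matrix Complex

open scoped Nat

noncomputable section

/-- The swap operator `S` on `ℂ^N ⊗ ℂ^N`: `⟨iα|S|jβ⟩ = δ_{iβ} δ_{αj}`. -/
def swapOp (N : ℕ) : Matrix (Fin N × Fin N) (Fin N × Fin N) ℂ :=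
  Matrix.of fun p q => if p.1 = q.2 ∧ p.2 = q.1 then 1 else 0

/-- The reshuffled matrix: `(U^R)_{ij,αβ} = U_{iα,jβ}`. -/
def resh (N : ℕ) (U : Matrix (Fin N × Fin N) (Fin N × Fin N) ℂ) :
    Matrix (Fin N × Fin N) (Fin N × Fin N) ℂ :=
  Matrix.of fun p q => U (p.1, q.1) (p.2, q.2)

/-- Linear operator entanglement `E(U) = 1 - (1/N⁴) Tr((U^R U^{R†})²)`. -/
def EE (N : ℕ) (U : Matrix (Fin N × Fin N) (Fin N × Fin N) ℂ) : ℝ :=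
  1 - (1 / (N : ℝ) ^ 4) * (((resh N U * (resh N U)ᴴ) ^ 2).trace).re

/-- Entangling power `e_p(U) = [E(U) + E(US) − E(S)] / E(S)`. -/
def ep (N : ℕ) (U : Matrix (Fin N × Fin N) (Fin N × Fin N) ℂ) : ℝ :=
  (EE N U + EE N (U * swapOp N) - EE N (swapOp N)) / EE N (swapOp N)

/-- Gate typicality `g_t(U) = [E(U) − E(US) + E(S)] / (2 E(S))`. -/
def gt' (N : ℕ) (U : Matrix (Fin N × Fin N) (Fin N × Fin N) ℂ) : ℝ :=
  (EE N U - EE N (U * swapOp N) + EE N (swapOp N)) / (2 * EE N (swapOp N))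

/-- The rank-one "realigned identity" matrix `J = N |Φ⁺⟩⟨Φ⁺|` viewed entrywise. -/
def Jmat (N : ℕ) : Matrix (Fin N × Fin N) (Fin N × Fin N) ℂ :=
  Matrix.of fun p q => if p.1 = p.2 ∧ q.1 = q.2 then 1 else 0

lemma swap_mul_swap (N : ℕ) : swapOp N * swapOp N = 1 := by
  ext p q
  simp only [Matrix.mul_apply, swapOp, of_apply, Matrix.one_apply]
  rw [Finset.sum_eq_single (q.2, q.1)]
  · by_cases h : p = q <;> aesop
  · intro r _ hr
    by_cases h1 : p.1 = r.2 <;> by_cases h2 : p.2 = r.1 <;> aesop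
  · simp

lemma J_mul_J (N : ℕ) : Jmat N * Jmat N = (N : ℂ) • Jmat N := by
  ext p q
  simp only [Matrix.mul_apply, Jmat, of_apply, Matrix.smul_apply, smul_eq_mul]
  rw [Finset.sum_congr rfl (fun r _ => by
    rw [show (if p.1 = p.2 ∧ r.1 = r.2 then (1:ℂ) else 0) * (if r.1 = r.2 ∧ q.1 = q.2 then 1 else 0)
      = if r.1 = r.2 then (if p.1 = p.2 ∧ q.1 = q.2 then 1 else 0) else 0 by aesop])]
  rw [Fintype.sum_prod_type]
  simp [Finset.sum_ite_eq, Finset.mul_sum]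

lemma J_mul_S (N : ℕ) : Jmat N * swapOp N = Jmat N := by
  ext p q
  simp only [Matrix.mul_apply, Jmat, swapOp, of_apply]
  rw [Finset.sum_eq_single (q.2, q.1)]
  · aesop
  · intro r _ hr; by_cases h1 : r.1 = q.2 <;> aesop
  · simp

lemma S_mul_J (N : ℕ) : swapOp N * Jmat N = Jmat N := by
  ext p q
  simp only [Matrix.mul_apply, Jmat, swapOp, of_apply]
  rw [Finset.sum_eq_single (p.2, p.1)]
  · aesop
  · intro r _ hr; by_cases h1 : p.1 = r.2 <;> aesop
  · simp

lemma J_conjT (N : ℕ) : (Jmat N)ᴴ = Jmat N := by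
  ext p q
  simp only [Matrix.conjTranspose_apply, Jmat, of_apply]
  by_cases h1 : p.1 = p.2 <;> by_cases h2 : q.1 = q.2 <;> aesop

lemma S_conjT (N : ℕ) : (swapOp N)ᴴ = swapOp N := by
  ext p q
  simp only [Matrix.conjTranspose_apply, swapOp, of_apply]
  by_cases h1 : p.1 = q.2 <;> by_cases h2 : p.2 = q.1 <;> aesop

lemma trace_J (N : ℕ) : (Jmat N).trace = (N : ℂ) := by
  simp only [Matrix.trace, Matrix.diag, Jmat, of_apply, and_self]
  rw [Fintype.sum_prod_type]
  simp [Finset.sum_ite_eq]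

lemma trace_one' (N : ℕ) : (1 : Matrix (Fin N × Fin N) (Fin N × Fin N) ℂ).trace = (N : ℂ)^2 := by
  simp [Matrix.trace_one]; ring

lemma resh_comb (N : ℕ) (a b : ℂ) (A B : Matrix (Fin N × Fin N) (Fin N × Fin N) ℂ) :
    resh N (a • A + b • B) = a • resh N A + b • resh N B := by
  ext p q; simp [resh]

lemma resh_one (N : ℕ) : resh N 1 = Jmat N := by
  ext p q
  simp only [resh, of_apply, Matrix.one_apply, Jmat, Prod.mk.injEq, Prod.ext_iff]

lemma resh_S (N : ℕ) : resh N (swapOp N) = swapOp N := by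
  ext p q
  simp only [resh, of_apply, swapOp]
  by_cases h1 : p.1 = q.2 <;> by_cases h2 : p.2 = q.1 <;> aesop

lemma RR' (N : ℕ) (a b : ℂ) :
    ((a • Jmat N + b • swapOp N) * (a • Jmat N + b • swapOp N)ᴴ) =
      ((N:ℂ) * (a * starRingEnd ℂ a) + (a * starRingEnd ℂ b + starRingEnd ℂ a * b)) • Jmat N
        + (b * starRingEnd ℂ b) • 1 := by
  rw [conjTranspose_add, conjTranspose_smul, conjTranspose_smul, J_conjT, S_conjT]
  simp only [add_mul, mul_add, smul_mul_assoc, mul_smul_comm, J_mul_J, J_mul_S, S_mul_J,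
    swap_mul_swap, smul_smul]
  simp only [starRingEnd_apply]
  module

lemma trace_sq (N : ℕ) (c d : ℂ) :
    (((c • Jmat N + d • (1 : Matrix (Fin N × Fin N) (Fin N × Fin N) ℂ))) ^ 2).trace
      = (c^2*(N:ℂ) + 2*c*d)*(N:ℂ) + d^2*(N:ℂ)^2 := by
  rw [pow_two]
  simp only [add_mul, mul_add, smul_mul_assoc, mul_smul_comm, J_mul_J, Matrix.mul_one,
    Matrix.one_mul, smul_smul, trace_add, trace_smul, trace_J, trace_one', smul_eq_mul]
  ring

lemma EE_calc (N : ℕ) (hN : 0 < N) (a b : ℂ) (x y : ℝ)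
    (ha : a * starRingEnd ℂ a = (x : ℂ)) (hb : b * starRingEnd ℂ b = (y : ℂ))
    (hab : a * starRingEnd ℂ b + starRingEnd ℂ a * b = 0)
    (hxy : x + y = 1) (U : Matrix (Fin N × Fin N) (Fin N × Fin N) ℂ)
    (hU : resh N U = a • Jmat N + b • swapOp N) :
    EE N U = (1 - 1 / (N : ℝ) ^ 2) * (1 - x ^ 2) := by
  have hNR : (N : ℝ) ≠ 0 := Nat.cast_ne_zero.mpr hN.ne'
  have hR : resh N U * (resh N U)ᴴ = ((N:ℂ) * (x:ℂ)) • Jmat N + (y:ℂ) • 1 := by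
    rw [hU, RR', hab, add_zero, ha, hb]
  rw [EE, hR, trace_sq]
  have : (((N:ℂ) * (x:ℂ))^2*(N:ℂ) + 2*((N:ℂ)*(x:ℂ))*(y:ℂ))*(N:ℂ) + (y:ℂ)^2*(N:ℂ)^2
      = (((((N:ℝ)*x)^2*(N:ℝ) + 2*((N:ℝ)*x)*y)*(N:ℝ) + y^2*(N:ℝ)^2 : ℝ) : ℂ) := by
    push_cast; ring
  rw [this, Complex.ofReal_re]
  have hy : y = 1 - x := by linarith
  subst hy
  field_simp
  ring

lemma exp_swap (N : ℕ) (t : ℝ) :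
    NormedSpace.exp ((Complex.I * (t : ℂ)) • swapOp N) =
      (Complex.cos t) • 1 + (Complex.sin t * Complex.I) • swapOp N := by
  rw [NormedSpace.exp_eq_tsum (𝕂 := ℂ)]
  refine HasSum.tsum_eq ?_
  have hs2 : swapOp N ^ 2 = 1 := by rw [pow_two, swap_mul_swap]
  have hpe : ∀ k : ℕ, swapOp N ^ (2 * k) = 1 := fun k => by rw [pow_mul, hs2, one_pow]
  have hpo : ∀ k : ℕ, swapOp N ^ (2 * k + 1) = swapOp N := fun k => by
    rw [pow_succ, hpe, one_mul]
  have heven : HasSum (fun k : ℕ =>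
      (((2*k)! : ℂ)⁻¹) • ((Complex.I * (t:ℂ)) • swapOp N) ^ (2*k))
      ((Complex.cos t) • (1 : Matrix (Fin N × Fin N) (Fin N × Fin N) ℂ)) := by
    have := (Complex.hasSum_cos' (t : ℂ)).smul_const
      (1 : Matrix (Fin N × Fin N) (Fin N × Fin N) ℂ)
    convert this using 2 with k
    rw [smul_pow, hpe, smul_smul, mul_comm Complex.I, div_eq_inv_mul]
  have hsin : HasSum (fun k : ℕ => ((t:ℂ) * Complex.I) ^ (2*k+1) / ((2*k+1)! : ℂ))
      (Complex.sin t * Complex.I) := by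
    have := (Complex.hasSum_sin' (t : ℂ)).mul_right Complex.I
    simpa only [div_mul_cancel₀, ne_eq, Complex.I_ne_zero, not_false_eq_true] using this
  have hodd : HasSum (fun k : ℕ =>
      (((2*k+1)! : ℂ)⁻¹) • ((Complex.I * (t:ℂ)) • swapOp N) ^ (2*k+1))
      ((Complex.sin t * Complex.I) • swapOp N) := by
    have := hsin.smul_const (swapOp N)
    convert this using 2 with k
    rw [smul_pow, hpo, smul_smul, mul_comm Complex.I, div_eq_inv_mul]
  exact HasSum.even_add_odd
    (f := fun n : ℕ => ((n ! : ℂ)⁻¹) • ((Complex.I * (t:ℂ)) • swapOp N) ^ n) heven hodd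

/-- Operator entanglements of the fractional powers of swap:
`E(U_t) = E(S)(1 − cos⁴ t)` and `E(U_t S) = E(S)(1 − sin⁴ t)`, with `E(S) = 1 − 1/N²`. -/
theorem EE_swap_powers (N : ℕ) (hN : 0 < N) (t : ℝ) :
    EE N (NormedSpace.exp ((Complex.I * (t : ℂ)) • swapOp N)) =
      (1 - 1 / (N : ℝ) ^ 2) * (1 - Real.cos t ^ 4) ∧
    EE N (NormedSpace.exp ((Complex.I * (t : ℂ)) • swapOp N) * swapOp N) =
      (1 - 1 / (N : ℝ) ^ 2) * (1 - Real.sin t ^ 4) := by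
  have hexp : NormedSpace.exp ((Complex.I * (t : ℂ)) • swapOp N)
      = ((Real.cos t : ℂ)) • 1 + (((Real.sin t : ℂ)) * Complex.I) • swapOp N := by
    rw [exp_swap, Complex.ofReal_cos, Complex.ofReal_sin]
  constructor
  · have h := EE_calc N hN (Real.cos t) ((Real.sin t : ℂ) * Complex.I)
      (Real.cos t ^ 2) (Real.sin t ^ 2)
      (by rw [Complex.conj_ofReal]; push_cast; ring)
      (by simp only [_root_.map_mul, Complex.conj_ofReal, Complex.conj_I, Complex.ofReal_pow]
          linear_combination (-(Real.sin t : ℂ)^2) * Complex.I_sq)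
      (by simp only [_root_.map_mul, Complex.conj_ofReal, Complex.conj_I]; ring)
      (Real.cos_sq_add_sin_sq t)
      (NormedSpace.exp ((Complex.I * (t : ℂ)) • swapOp N))
      (by rw [hexp, resh_comb, resh_one, resh_S])
    rw [h]; ring
  · have hU2 : NormedSpace.exp ((Complex.I * (t : ℂ)) • swapOp N) * swapOp N
        = ((Real.sin t : ℂ) * Complex.I) • 1 + (Real.cos t : ℂ) • swapOp N := by
      rw [hexp, add_mul, smul_mul_assoc, smul_mul_assoc, one_mul, swap_mul_swap, add_comm]
    have h := EE_calc N hN ((Real.sin t : ℂ) * Complex.I) (Real.cos t)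
      (Real.sin t ^ 2) (Real.cos t ^ 2)
      (by simp only [_root_.map_mul, Complex.conj_ofReal, Complex.conj_I, Complex.ofReal_pow]
          linear_combination (-(Real.sin t : ℂ)^2) * Complex.I_sq)
      (by rw [Complex.conj_ofReal]; push_cast; ring)
      (by simp only [_root_.map_mul, Complex.conj_ofReal, Complex.conj_I]; ring)
      (Real.sin_sq_add_cos_sq t)
      (NormedSpace.exp ((Complex.I * (t : ℂ)) • swapOp N) * swapOp N)
      (by rw [hU2, resh_comb, resh_one, resh_S])
    rw [h]; ring

end
end

section
/- For a CNOT gate C on two qubits and the swap gate S, the family CS^α (0 ≤ α ≤ 1), with S^α realized via exp(iπαS/2) up to phase, satisfies E(CS^α) = (5 − cos(πα))/8, and consequently e_p(CS^α) = 2/3 for all α, while g_t(CS^α) = 1/2 − cos(πα)/6. -/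
open Matrix Complex

noncomputable section

/-- The CNOT gate on two qubits: `CNOT |i,α⟩ = |i, i ⊕ α⟩`. -/
def cnot : Matrix (Fin 2 × Fin 2) (Fin 2 × Fin 2) ℂ :=
  Matrix.of fun p q => if p.1 = q.1 ∧ p.2 = q.1 + q.2 then 1 else 0

/-! ### Auxiliary lemmas -/

/-- Exponential of a scalar multiple of an involution. -/
lemma exp_invol {A : Type*} [NormedRing A] [NormedAlgebra ℂ A] [CompleteSpace A]
    (S : A) (hS : S * S = 1) (c : ℂ) :
    NormedSpace.exp (c • S) =
      ((Complex.exp c + Complex.exp (-c)) / 2) • (1 : A) +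
      ((Complex.exp c - Complex.exp (-c)) / 2) • S := by
  have hpow : ∀ n : ℕ, (c • S) ^ n =
      ((c ^ n + (-c) ^ n) / 2) • (1 : A) + ((c ^ n - (-c) ^ n) / 2) • S := by
    intro n
    induction n with
    | zero => norm_num
    | succ n ih =>
      rw [pow_succ, ih, add_mul, smul_mul_assoc, smul_mul_assoc, one_mul,
        mul_smul_comm, hS, smul_smul, smul_smul]
      match_scalars <;> ring
  rw [NormedSpace.exp_eq_tsum (𝕂 := ℂ)]
  simp only [hpow]
  have s1 : Summable (fun n : ℕ => (Nat.factorial n : ℂ)⁻¹ • c ^ n) :=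
    NormedSpace.expSeries_summable' (𝕂 := ℂ) c
  have s2 : Summable (fun n : ℕ => (Nat.factorial n : ℂ)⁻¹ • (-c) ^ n) :=
    NormedSpace.expSeries_summable' (𝕂 := ℂ) (-c)
  have hf : Summable (fun n : ℕ => (Nat.factorial n : ℂ)⁻¹ * ((c ^ n + (-c) ^ n) / 2)) := by
    have := (s1.add s2).div_const 2
    convert this using 2 with n
    · rfl
    simp [smul_eq_mul]; ring
  have hg : Summable (fun n : ℕ => (Nat.factorial n : ℂ)⁻¹ * ((c ^ n - (-c) ^ n) / 2)) := by
    have := (s1.sub s2).div_const 2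
    convert this using 2 with n
    · rfl
    simp [smul_eq_mul]; ring
  have key : ∀ n : ℕ, (Nat.factorial n : ℂ)⁻¹ •
      (((c ^ n + (-c) ^ n) / 2) • (1 : A) + ((c ^ n - (-c) ^ n) / 2) • S)
      = ((Nat.factorial n : ℂ)⁻¹ * ((c ^ n + (-c) ^ n) / 2)) • (1 : A)
        + ((Nat.factorial n : ℂ)⁻¹ * ((c ^ n - (-c) ^ n) / 2)) • S := by
    intro n; rw [smul_add, smul_smul, smul_smul]
  simp only [key]
  rw [Summable.tsum_add (hf.smul_const _) (hg.smul_const _), Summable.tsum_smul_const hf, Summable.tsum_smul_const hg]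
  have he : ∀ z : ℂ, ∑' n : ℕ, (Nat.factorial n : ℂ)⁻¹ • z ^ n = Complex.exp z := by
    intro z
    rw [Complex.exp_eq_exp_ℂ, NormedSpace.exp_eq_tsum (𝕂 := ℂ)]
  congr 1
  · congr 1
    rw [← he c, ← he (-c), ← Summable.tsum_add s1 s2, ← tsum_div_const]
    congr 1 with n
    simp [smul_eq_mul]; ring
  · congr 1
    rw [← he c, ← he (-c), ← Summable.tsum_sub s1 s2, ← tsum_div_const]
    congr 1 with n
    simp [smul_eq_mul]; ring

lemma swap_sq : swapOp 2 * swapOp 2 = 1 := by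
  ext ⟨i, j⟩ ⟨k, l⟩
  fin_cases i <;> fin_cases j <;> fin_cases k <;> fin_cases l <;>
    simp [swapOp, Matrix.mul_apply, Fintype.sum_prod_type, Fin.sum_univ_two,
      Matrix.one_apply, Prod.ext_iff]

lemma exp_swap_s6 (θ : ℝ) :
    NormedSpace.exp ((Complex.I * (θ : ℂ)) • swapOp 2) =
      ((Real.cos θ : ℂ)) • (1 : Matrix (Fin 2 × Fin 2) (Fin 2 × Fin 2) ℂ) +
      ((Real.sin θ : ℂ) * Complex.I) • swapOp 2 := by
  letI : NormedRing (Matrix (Fin 2 × Fin 2) (Fin 2 × Fin 2) ℂ) := Matrix.linftyOpNormedRing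
  letI : NormedAlgebra ℂ (Matrix (Fin 2 × Fin 2) (Fin 2 × Fin 2) ℂ) :=
    Matrix.linftyOpNormedAlgebra
  erw [exp_invol _ swap_sq]
  have e1 : Complex.exp (Complex.I * (θ : ℂ)) =
      Complex.cos θ + Complex.sin θ * Complex.I := by
    rw [mul_comm, Complex.exp_mul_I]
  have e2 : Complex.exp (-(Complex.I * (θ : ℂ))) =
      Complex.cos θ - Complex.sin θ * Complex.I := by
    rw [show -(Complex.I * (θ : ℂ)) = (-(θ : ℂ)) * Complex.I by ring,
      Complex.exp_mul_I, Complex.cos_neg, Complex.sin_neg]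
    ring
  congr 1
  · congr 1
    rw [e1, e2, Complex.ofReal_cos]; ring
  · congr 1
    rw [e1, e2, Complex.ofReal_sin]; ring

/-- Explicit form of `V V†` for `U = a C + i b (CS)`. -/
def mA (x y : ℂ) : Matrix (Fin 2 × Fin 2) (Fin 2 × Fin 2) ℂ :=
  Matrix.of fun p q =>
    if p = q then (if p.1 = p.2 then x ^ 2 + y ^ 2 + x ^ 2 else y ^ 2)
    else if p = (0, 0) ∧ q = (1, 0) then -(x * y * Complex.I)
    else if p = (1, 0) ∧ q = (0, 0) then x * y * Complex.I
    else if p = (0, 1) ∧ q = (1, 1) then x * y * Complex.I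
    else if p = (1, 1) ∧ q = (0, 1) then -(x * y * Complex.I)
    else 0

/-- Explicit form of `V V†` for `US = a (CS) + i b C`. -/
def mB (x y : ℂ) : Matrix (Fin 2 × Fin 2) (Fin 2 × Fin 2) ℂ :=
  Matrix.of fun p q =>
    if p = q then (if p.1 = p.2 then x ^ 2 + y ^ 2 + y ^ 2 else x ^ 2)
    else if p = (0, 0) ∧ q = (1, 0) then x * y * Complex.I
    else if p = (1, 0) ∧ q = (0, 0) then -(x * y * Complex.I)
    else if p = (0, 1) ∧ q = (1, 1) then -(x * y * Complex.I)
    else if p = (1, 1) ∧ q = (0, 1) then x * y * Complex.I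
    else 0

lemma hMA (a b : ℝ) :
    resh 2 ((a : ℂ) • cnot + ((b : ℂ) * Complex.I) • (cnot * swapOp 2)) *
      (resh 2 ((a : ℂ) • cnot + ((b : ℂ) * Complex.I) • (cnot * swapOp 2)))ᴴ
      = mA (a : ℂ) (b : ℂ) := by
  ext ⟨i, j⟩ ⟨k, l⟩
  fin_cases i <;> fin_cases j <;> fin_cases k <;> fin_cases l <;>
    · simp [resh, cnot, swapOp, mA, Matrix.mul_apply, Matrix.conjTranspose_apply,
        Fintype.sum_prod_type, Fin.sum_univ_two, Prod.ext_iff, Complex.conj_ofReal]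
      try ring_nf
      try simp [Complex.I_sq]
      try ring_nf

lemma hMB (a b : ℝ) :
    resh 2 ((a : ℂ) • (cnot * swapOp 2) + ((b : ℂ) * Complex.I) • cnot) *
      (resh 2 ((a : ℂ) • (cnot * swapOp 2) + ((b : ℂ) * Complex.I) • cnot))ᴴ
      = mB (a : ℂ) (b : ℂ) := by
  ext ⟨i, j⟩ ⟨k, l⟩
  fin_cases i <;> fin_cases j <;> fin_cases k <;> fin_cases l <;>
    · simp [resh, cnot, swapOp, mB, Matrix.mul_apply, Matrix.conjTranspose_apply,
        Fintype.sum_prod_type, Fin.sum_univ_two, Prod.ext_iff, Complex.conj_ofReal]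
      try ring_nf
      try simp [Complex.I_sq]
      try ring_nf

lemma trA (x y : ℂ) : ((mA x y) ^ 2).trace
    = 2 * (x ^ 2 + y ^ 2 + x ^ 2) ^ 2 + 2 * y ^ 4 + 4 * x ^ 2 * y ^ 2 := by
  simp only [sq]
  simp [Matrix.trace, Matrix.diag, Matrix.mul_apply, mA,
    Fintype.sum_prod_type, Fin.sum_univ_two, Prod.ext_iff]
  try ring_nf
  try simp [Complex.I_sq]
  try ring_nf
  try ring

lemma trB (x y : ℂ) : ((mB x y) ^ 2).trace
    = 2 * (x ^ 2 + y ^ 2 + y ^ 2) ^ 2 + 2 * x ^ 4 + 4 * x ^ 2 * y ^ 2 := by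
  simp only [sq]
  simp [Matrix.trace, Matrix.diag, Matrix.mul_apply, mB,
    Fintype.sum_prod_type, Fin.sum_univ_two, Prod.ext_iff]
  try ring_nf
  try simp [Complex.I_sq]
  try ring_nf
  try ring

lemma hMS : resh 2 (swapOp 2) * (resh 2 (swapOp 2))ᴴ = 1 := by
  ext ⟨i, j⟩ ⟨k, l⟩
  fin_cases i <;> fin_cases j <;> fin_cases k <;> fin_cases l <;>
    simp [resh, swapOp, Matrix.mul_apply, Matrix.conjTranspose_apply,
      Fintype.sum_prod_type, Fin.sum_univ_two, Matrix.one_apply, Prod.ext_iff]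

lemma EE_swap : EE 2 (swapOp 2) = 3 / 4 := by
  rw [EE, hMS, one_pow, Matrix.trace_one]
  norm_num

lemma EE_A (a b : ℝ) (hab : a ^ 2 + b ^ 2 = 1) :
    EE 2 ((a : ℂ) • cnot + ((b : ℂ) * Complex.I) • (cnot * swapOp 2)) = (3 - a ^ 2) / 4 := by
  rw [EE, hMA, trA]
  have : ((2 * ((a:ℂ) ^ 2 + (b:ℂ) ^ 2 + (a:ℂ) ^ 2) ^ 2 + 2 * (b:ℂ) ^ 4
      + 4 * (a:ℂ) ^ 2 * (b:ℂ) ^ 2)).re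
      = 2 * (a ^ 2 + b ^ 2 + a ^ 2) ^ 2 + 2 * b ^ 4 + 4 * a ^ 2 * b ^ 2 := by
    norm_cast
  rw [this]
  have hb : b ^ 2 = 1 - a ^ 2 := by linarith
  have hb4 : b ^ 4 = (1 - a ^ 2) ^ 2 := by rw [show b ^ 4 = (b ^ 2) ^ 2 by ring, hb]
  rw [hb, hb4]
  norm_num
  ring

lemma EE_B (a b : ℝ) (hab : a ^ 2 + b ^ 2 = 1) :
    EE 2 ((a : ℂ) • (cnot * swapOp 2) + ((b : ℂ) * Complex.I) • cnot) = (3 - b ^ 2) / 4 := by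
  rw [EE, hMB, trB]
  have : ((2 * ((a:ℂ) ^ 2 + (b:ℂ) ^ 2 + (b:ℂ) ^ 2) ^ 2 + 2 * (a:ℂ) ^ 4
      + 4 * (a:ℂ) ^ 2 * (b:ℂ) ^ 2)).re
      = 2 * (a ^ 2 + b ^ 2 + b ^ 2) ^ 2 + 2 * a ^ 4 + 4 * a ^ 2 * b ^ 2 := by
    norm_cast
  rw [this]
  have ha : a ^ 2 = 1 - b ^ 2 := by linarith
  have ha4 : a ^ 4 = (1 - b ^ 2) ^ 2 := by rw [show a ^ 4 = (a ^ 2) ^ 2 by ring, ha]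
  rw [ha, ha4]
  norm_num
  ring

/-- For the family `C S^α` (with `S^α` realized via `exp(iπαS/2)`, up to phase),
`E(CS^α) = (5 − cos(πα))/8`, `e_p(CS^α) = 2/3`, and `g_t(CS^α) = 1/2 − cos(πα)/6`. -/
theorem cnot_swap_family (α : ℝ) (h0 : 0 ≤ α) (h1 : α ≤ 1) :
    EE 2 (cnot * NormedSpace.exp ((Complex.I * ((Real.pi * α / 2 : ℝ) : ℂ)) • swapOp 2)) =
      (5 - Real.cos (Real.pi * α)) / 8 ∧
    ep 2 (cnot * NormedSpace.exp ((Complex.I * ((Real.pi * α / 2 : ℝ) : ℂ)) • swapOp 2)) =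
      2 / 3 ∧
    gt' 2 (cnot * NormedSpace.exp ((Complex.I * ((Real.pi * α / 2 : ℝ) : ℂ)) • swapOp 2)) =
      1 / 2 - Real.cos (Real.pi * α) / 6 := by
  set θ : ℝ := Real.pi * α / 2 with hθ
  set a : ℝ := Real.cos θ with ha
  set b : ℝ := Real.sin θ with hb
  have hab : a ^ 2 + b ^ 2 = 1 := by
    rw [ha, hb, add_comm]; exact Real.sin_sq_add_cos_sq θ
  have hU : cnot * NormedSpace.exp ((Complex.I * (θ : ℂ)) • swapOp 2)
      = (a : ℂ) • cnot + ((b : ℂ) * Complex.I) • (cnot * swapOp 2) := by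
    rw [exp_swap_s6 θ, mul_add, mul_smul_comm, mul_smul_comm, mul_one]
  have hUS : (cnot * NormedSpace.exp ((Complex.I * (θ : ℂ)) • swapOp 2)) * swapOp 2
      = (a : ℂ) • (cnot * swapOp 2) + ((b : ℂ) * Complex.I) • cnot := by
    rw [hU, add_mul, smul_mul_assoc, smul_mul_assoc, mul_assoc, swap_sq, mul_one]
  have hcos : Real.cos (Real.pi * α) = 2 * a ^ 2 - 1 := by
    rw [show Real.pi * α = 2 * θ by rw [hθ]; ring, Real.cos_two_mul, ha]
  have hE1 : EE 2 (cnot * NormedSpace.exp ((Complex.I * (θ : ℂ)) • swapOp 2))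
      = (3 - a ^ 2) / 4 := by rw [hU]; exact EE_A a b hab
  have hE2 : EE 2 ((cnot * NormedSpace.exp ((Complex.I * (θ : ℂ)) • swapOp 2)) * swapOp 2)
      = (3 - b ^ 2) / 4 := by rw [hUS]; exact EE_B a b hab
  refine ⟨?_, ?_, ?_⟩
  · rw [hE1, hcos]; ring
  · rw [ep, hE1, hE2, EE_swap]
    rw [div_eq_iff (by norm_num : (3 : ℝ) / 4 ≠ 0)]
    linear_combination (-1 / 4 : ℝ) * hab
  · rw [gt', hE1, hE2, EE_swap, hcos]
    rw [div_eq_iff (by norm_num : (2 * ((3 : ℝ) / 4)) ≠ 0)]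
    linear_combination (1 / 4 : ℝ) * hab
end
end
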